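/- Let n > m ≥ 2 be integers, let A_1, …, A_{m−1} be a skew Clifford system on ℝ^{n+1}, set c = (m−1)/(n−1) and F(x,y) = ⟨x,y⟩² + Σ_{q=1}^{m−1} ⟨A_q x, y⟩². Suppose ‖x‖ = ‖y‖ = 1 and F(x,y) = c; write B_p = ⟨A_p x, y⟩. For real numbers θ ∈ (0, π) and α, set t = sinθ sinα/√(c(1−c)), r = cosθ + sinθ cosα − ct, s = cosθ − sinθ cosα − ct, and x̃ = r x + t(⟨x,y⟩ y + Σ_p B_p A_pᵀ y), ỹ = s y + t(⟨x,y⟩ x + Σ_p B_p A_p x). If ‖x̃‖ = ‖ỹ‖ = 1 and F(x̃, ỹ) = c, then θ ≥ min{arctan√(c/(1−c)), arctan√((1−c)/c)}. (This computes the normal radius of the cone over the minimal FKM isoparametric hypersurface: every normal geodesic in S^{2n+1}(√2) starting on the hypersurface meets it again only after distance at least min{arctan√(c/(1−c)), arctan√((1−c)/c)}.) -/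

import Mathlib

open Matrix
open scoped RealInnerProductSpace BigOperators

noncomputable section

/-- A skew Clifford system `A_1, …, A_{m-1}` on `ℝ^N`: skew-symmetric matrices with
`A_p A_q + A_q A_p = -2 δ_{pq} Id`. -/
def IsSkewCliffordSystem {N m : ℕ} (A : Fin (m - 1) → Matrix (Fin N) (Fin N) ℝ) : Prop :=
  (∀ p q, A p * A q + A q * A p =
      if p = q then (-2 : ℝ) • (1 : Matrix (Fin N) (Fin N) ℝ) else 0) ∧
  (∀ p, (A p)ᵀ = -A p)

/-- The action of a matrix on Euclidean space. -/
def act {N : ℕ} (A : Matrix (Fin N) (Fin N) ℝ) (x : EuclideanSpace ℝ (Fin N)) :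
    EuclideanSpace ℝ (Fin N) :=
  Matrix.toEuclideanLin A x

/-- The splitting form of the FKM isoparametric polynomial:
`F(x,y) = ⟨x,y⟩² + Σ_q ⟨A_q x, y⟩²`. -/
def FKM {N m : ℕ} (A : Fin (m - 1) → Matrix (Fin N) (Fin N) ℝ)
    (x y : EuclideanSpace ℝ (Fin N)) : ℝ :=
  ⟪x, y⟫ ^ 2 + ∑ q, ⟪act (A q) x, y⟫ ^ 2

namespace SCS
variable {N k : ℕ}

lemma inner_eq_dot (v w : EuclideanSpace ℝ (Fin N)) :
    ⟪v, w⟫ = (WithLp.equiv 2 _ v) ⬝ᵥ (WithLp.equiv 2 _ w) := by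
  simp only [PiLp.inner_apply, RCLike.inner_apply, conj_trivial]
  exact Finset.sum_congr rfl fun i _ => mul_comm _ _

lemma act_apply (M : Matrix (Fin N) (Fin N) ℝ) (v : EuclideanSpace ℝ (Fin N)) :
    WithLp.equiv 2 _ (act M v) = M *ᵥ (WithLp.equiv 2 _ v) := rfl

lemma inner_act (M : Matrix (Fin N) (Fin N) ℝ) (v w : EuclideanSpace ℝ (Fin N)) :
    ⟪act M v, w⟫ = ⟪v, act Mᵀ w⟫ := by
  rw [inner_eq_dot, inner_eq_dot, act_apply, act_apply, Matrix.dotProduct_mulVec,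
    Matrix.vecMul_transpose]

lemma act_act (M P : Matrix (Fin N) (Fin N) ℝ) (v : EuclideanSpace ℝ (Fin N)) :
    act M (act P v) = act (M * P) v := by
  apply (WithLp.equiv 2 _).injective
  rw [act_apply, act_apply, act_apply, Matrix.mulVec_mulVec]

lemma act_one (v : EuclideanSpace ℝ (Fin N)) : act 1 v = v := by
  apply (WithLp.equiv 2 _).injective
  rw [act_apply, Matrix.one_mulVec]

lemma act_neg (M : Matrix (Fin N) (Fin N) ℝ) (v : EuclideanSpace ℝ (Fin N)) :
    act (-M) v = -act M v := by simp [act]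

lemma act_zero (v : EuclideanSpace ℝ (Fin N)) : act (0 : Matrix (Fin N) (Fin N) ℝ) v = 0 := by
  simp [act]

lemma act_smulM (r : ℝ) (M : Matrix (Fin N) (Fin N) ℝ) (v : EuclideanSpace ℝ (Fin N)) :
    act (r • M) v = r • act M v := by simp [act]

lemma act_addM (M P : Matrix (Fin N) (Fin N) ℝ) (v : EuclideanSpace ℝ (Fin N)) :
    act (M + P) v = act M v + act P v := by simp [act]

lemma act_add (M : Matrix (Fin N) (Fin N) ℝ) (v w : EuclideanSpace ℝ (Fin N)) :
    act M (v + w) = act M v + act M w := by simp [act]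

lemma act_smul (M : Matrix (Fin N) (Fin N) ℝ) (r : ℝ) (v : EuclideanSpace ℝ (Fin N)) :
    act M (r • v) = r • act M v := by simp [act]

lemma act_sum (M : Matrix (Fin N) (Fin N) ℝ) (f : Fin k → EuclideanSpace ℝ (Fin N)) :
    act M (∑ p, f p) = ∑ p, act M (f p) := by simp [act]

variable (A : Fin k → Matrix (Fin N) (Fin N) ℝ)

lemma clifford_pair
    (hcl : ∀ p q, A p * A q + A q * A p =
      if p = q then (-2 : ℝ) • (1 : Matrix (Fin N) (Fin N) ℝ) else 0)
    (v w : EuclideanSpace ℝ (Fin N)) (p q : Fin k) :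
    ⟪v, act (A p * A q) w⟫ + ⟪v, act (A q * A p) w⟫ =
      if p = q then -2 * ⟪v, w⟫ else 0 := by
  rw [← inner_add_right, ← act_addM, hcl]
  split_ifs
  · rw [act_smulM, act_one, real_inner_smul_right]
  · rw [act_zero, inner_zero_right]

lemma inner_act_skew (hsk : ∀ p, (A p)ᵀ = -A p) (p : Fin k)
    (v w : EuclideanSpace ℝ (Fin N)) :
    ⟪act (A p) v, w⟫ = -⟪v, act (A p) w⟫ := by
  rw [inner_act, hsk, act_neg, inner_neg_right]

lemma inner_act_self (hsk : ∀ p, (A p)ᵀ = -A p) (p : Fin k)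
    (v : EuclideanSpace ℝ (Fin N)) : ⟪act (A p) v, v⟫ = 0 := by
  have h := inner_act_skew A hsk p v v
  have h2 := real_inner_comm (act (A p) v) v
  linarith

lemma act_pair (hsk : ∀ p, (A p)ᵀ = -A p) (p q : Fin k)
    (v w : EuclideanSpace ℝ (Fin N)) :
    ⟪act (A p) v, act (A q) w⟫ = -⟪v, act (A p * A q) w⟫ := by
  rw [inner_act_skew A hsk, act_act]

lemma act_orth
    (hcl : ∀ p q, A p * A q + A q * A p =
      if p = q then (-2 : ℝ) • (1 : Matrix (Fin N) (Fin N) ℝ) else 0)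
    (hsk : ∀ p, (A p)ᵀ = -A p) (v : EuclideanSpace ℝ (Fin N)) (p q : Fin k) :
    ⟪act (A p) v, act (A q) v⟫ = if p = q then ⟪v, v⟫ else 0 := by
  have h1 := act_pair A hsk p q v v
  have h2 := act_pair A hsk q p v v
  have h3 := clifford_pair A hcl v v p q
  have h4 := real_inner_comm (act (A p) v) (act (A q) v)
  split_ifs at h3 ⊢ with h
  · linarith
  · linarith

lemma double_symm (F : Fin k → Fin k → ℝ) :
    2 * (∑ p, ∑ q, F p q) = ∑ p, ∑ q, (F p q + F q p) := by
  simp only [Finset.sum_add_distrib, two_mul]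
  congr 1
  exact Finset.sum_comm ..

lemma exp_left (a : ℝ) (z : EuclideanSpace ℝ (Fin N)) (f : Fin k → ℝ)
    (g : Fin k → EuclideanSpace ℝ (Fin N)) (w : EuclideanSpace ℝ (Fin N)) :
    ⟪a • z + ∑ p, f p • g p, w⟫ = a * ⟪z, w⟫ + ∑ p, f p * ⟪g p, w⟫ := by
  simp [inner_add_left, sum_inner, real_inner_smul_left, Finset.mul_sum, mul_assoc]

lemma exp_right (a : ℝ) (z : EuclideanSpace ℝ (Fin N)) (f : Fin k → ℝ)
    (g : Fin k → EuclideanSpace ℝ (Fin N)) (w : EuclideanSpace ℝ (Fin N)) :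
    ⟪w, a • z + ∑ p, f p • g p⟫ = a * ⟪w, z⟫ + ∑ p, f p * ⟪w, g p⟫ := by
  simp [inner_add_right, inner_sum, real_inner_smul_right, Finset.mul_sum, mul_assoc, mul_comm, mul_left_comm]

lemma trip
    (hcl : ∀ p q, A p * A q + A q * A p =
      if p = q then (-2 : ℝ) • (1 : Matrix (Fin N) (Fin N) ℝ) else 0)
    (p q p' : Fin k) :
    A p * A q * A p' + A p' * A q * A p =
      (A p * A q + A q * A p) * A p' + (A q * A p' + A p' * A q) * A p
        - A q * (A p * A p' + A p' * A p) := by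
  noncomm_ring
end SCS

namespace SCS
variable {N k : ℕ}

lemma act_pairM (A : Fin k → Matrix (Fin N) (Fin N) ℝ) (hsk : ∀ p, (A p)ᵀ = -A p)
    (p : Fin k) (M : Matrix (Fin N) (Fin N) ℝ) (v w : EuclideanSpace ℝ (Fin N)) :
    ⟪act (A p) v, act M w⟫ = -⟪v, act (A p * M) w⟫ := by
  rw [inner_act_skew A hsk, act_act]

lemma act_subM (M P : Matrix (Fin N) (Fin N) ℝ) (v : EuclideanSpace ℝ (Fin N)) :
    act (M - P) v = act M v - act P v := by simp [act]

lemma sum_delta (f : Fin k → ℝ) (p : Fin k) :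
    ∑ q, f q * (if p = q then (1:ℝ) else 0) = f p := by
  simp [mul_ite, Finset.sum_ite_eq]

lemma sum_delta' (f : Fin k → ℝ) (p : Fin k) :
    ∑ q, f q * (if q = p then (1:ℝ) else 0) = f p := by
  simp [mul_ite, Finset.sum_ite_eq']

lemma ite_matrix (cnd : Prop) [Decidable cnd] :
    (if cnd then (-2:ℝ) • (1 : Matrix (Fin N) (Fin N) ℝ) else 0)
      = (if cnd then (-2:ℝ) else 0) • 1 := by
  split_ifs <;> simp

lemma act_combo (d1 d2 d3 : ℝ) (M1 M2 M3 : Matrix (Fin N) (Fin N) ℝ)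
    (v w : EuclideanSpace ℝ (Fin N)) :
    ⟪v, act ((d1 • (1 : Matrix (Fin N) (Fin N) ℝ)) * M1 + (d2 • 1) * M2
        - M3 * (d3 • 1)) w⟫
      = d1 * ⟪v, act M1 w⟫ + d2 * ⟪v, act M2 w⟫ - d3 * ⟪v, act M3 w⟫ := by
  rw [smul_mul_assoc, smul_mul_assoc, mul_smul_comm, one_mul, one_mul, mul_one]
  rw [SCS.act_subM, SCS.act_addM, SCS.act_smulM, SCS.act_smulM, SCS.act_smulM]
  rw [inner_sub_right, inner_add_right, real_inner_smul_right, real_inner_smul_right,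
    real_inner_smul_right]
end SCS

set_option maxHeartbeats 1000000 in
lemma stmt11_scalar (c θ α t r s K : ℝ) (hcc0 : 0 < c) (hc1 : c < 1)
    (hθ0 : 0 < θ) (hθπ : θ < Real.pi)
    (ht : t = Real.sin θ * Real.sin α / Real.sqrt (c * (1 - c)))
    (hr : r = Real.cos θ + Real.sin θ * Real.cos α - c * t)
    (hs : s = Real.cos θ - Real.sin θ * Real.cos α - c * t)
    (hKdef : K = r*s + r*t + s*t + c*t^2) (hK21 : K^2 = 1)
    (hxtxt : r^2 + 2*(r*t)*c + t^2*c = 1) :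
    θ ≥ min (Real.arctan (Real.sqrt (c / (1 - c))))
        (Real.arctan (Real.sqrt ((1 - c) / c))) := by
  have hsi : 0 < Real.sin θ := Real.sin_pos_of_pos_of_lt_pi hθ0 hθπ
  have hccpos : 0 < c*(1-c) := by nlinarith
  have hkpos : 0 < Real.sqrt (c*(1-c)) := Real.sqrt_pos.mpr hccpos
  have hksq : Real.sqrt (c*(1-c)) ^ 2 = c*(1-c) := Real.sq_sqrt (le_of_lt hccpos)
  have htk : t * Real.sqrt (c*(1-c)) = Real.sin θ * Real.sin α := by
    rw [ht, div_mul_cancel₀ _ (ne_of_gt hkpos)]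
  have ht2 : c*(1-c)*t^2 = Real.sin θ^2 * Real.sin α^2 := by
    linear_combination (t*Real.sqrt (c*(1-c)) + Real.sin θ*Real.sin α)*htk - t^2*hksq
  rw [hr] at hxtxt
  have hE : (Real.cos θ + Real.sin θ*Real.cos α)^2 + Real.sin θ^2*Real.sin α^2 = 1 := by
    linear_combination hxtxt - ht2
  have hcoca : Real.cos θ * Real.cos α = 0 := by
    have key : Real.sin θ * (Real.cos θ * Real.cos α) = 0 := by
      linear_combination (hE - Real.sin_sq_add_cos_sq θ
        - Real.sin θ^2 * (Real.sin_sq_add_cos_sq α))/2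
    rcases mul_eq_zero.mp key with h|h
    · exact absurd h (ne_of_gt hsi)
    · exact h
  have hKval : K = Real.cos θ^2 - Real.sin θ^2*Real.cos α^2 + 2*(1-c)*Real.cos θ*t
      - Real.sin θ^2*Real.sin α^2 := by
    rw [hKdef, hr, hs]; linear_combination -ht2
  have hminlt : min (Real.arctan (Real.sqrt (c/(1-c)))) (Real.arctan (Real.sqrt ((1-c)/c)))
      < Real.pi/2 :=
    lt_of_le_of_lt (min_le_left _ _) (Real.arctan_lt_pi_div_two _)
  have hpi2case : Real.cos θ = 0 →
      θ ≥ min (Real.arctan (Real.sqrt (c/(1-c)))) (Real.arctan (Real.sqrt ((1-c)/c))) := by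
    intro h0
    have hθeq : θ = Real.pi/2 := by
      refine Real.injOn_cos ⟨le_of_lt hθ0, le_of_lt hθπ⟩
        ⟨by positivity, by linarith [Real.pi_pos]⟩ ?_
      rw [h0, Real.cos_pi_div_two]
    rw [hθeq]; exact le_of_lt hminlt
  have hgtcase : Real.pi/2 < θ →
      θ ≥ min (Real.arctan (Real.sqrt (c/(1-c)))) (Real.arctan (Real.sqrt ((1-c)/c))) :=
    fun h => le_of_lt (lt_trans hminlt h)
  have hcneg : Real.cos θ < 0 →
      θ ≥ min (Real.arctan (Real.sqrt (c/(1-c)))) (Real.arctan (Real.sqrt ((1-c)/c))) := by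
    intro h
    apply hgtcase
    by_contra h'
    push_neg at h'
    have := Real.cos_nonneg_of_mem_Icc (x := θ) ⟨by linarith [Real.pi_pos], h'⟩
    linarith
  rcases mul_eq_zero.mp hcoca with hco | hca
  · exact hpi2case hco
  · have hsa2 : Real.sin α^2 = 1 := by
      have h0 := Real.sin_sq_add_cos_sq α
      rw [hca] at h0
      linear_combination h0
    have hfac : (K - 1)*(K + 1) = 0 := by linear_combination hK21
    have hKval2 : K = Real.cos θ^2 - Real.sin θ^2 + 2*(1-c)*Real.cos θ*t := by
      rw [hKval, hca]
      linear_combination (-(Real.sin θ^2)) * hsa2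
    have hps := Real.sin_sq_add_cos_sq θ
    rcases mul_eq_zero.mp hfac with hKm | hKp
    · -- K = 1
      have hA1 : (1-c)*Real.cos θ*t = Real.sin θ^2 := by
        linear_combination (hKm - hKval2 - hps)/2
      rcases lt_trichotomy (Real.cos θ) 0 with h|h|h
      · exact hcneg h
      · exact hpi2case h
      · have hθlt : θ < Real.pi/2 := by
          by_contra h'
          push_neg at h'
          have := Real.cos_nonpos_of_pi_div_two_le_of_le h' (by linarith [Real.pi_pos])
          linarith
        have hq : Real.sin θ * ((1-c)*Real.cos θ*Real.sin α)
            = Real.sin θ * (Real.sin θ*Real.sqrt (c*(1-c))) := by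
          linear_combination Real.sqrt (c*(1-c)) * hA1 - (1-c)*Real.cos θ*htk
        have hq2 : (1-c)*Real.cos θ*Real.sin α = Real.sin θ*Real.sqrt (c*(1-c)) :=
          mul_left_cancel₀ (ne_of_gt hsi) hq
        have hsa1 : Real.sin α = 1 := by
          have hfac2 : (Real.sin α - 1)*(Real.sin α + 1) = 0 := by linear_combination hsa2
          rcases mul_eq_zero.mp hfac2 with h4|h4
          · linarith
          · exfalso
            have hsa : Real.sin α = -1 := by linarith
            rw [hsa] at hq2
            nlinarith [mul_pos hsi hkpos, mul_pos (show (0:ℝ) < 1-c by linarith) h]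
        rw [hsa1] at hq2
        have hid : Real.sqrt ((1-c)/c) * Real.sqrt (c*(1-c)) = 1-c := by
          rw [← Real.sqrt_mul (div_nonneg (by linarith) (le_of_lt hcc0))]
          rw [show (1-c)/c*(c*(1-c)) = (1-c)^2 from by
            field_simp [ne_of_gt hcc0]]
          exact Real.sqrt_sq (by linarith)
        have h5 : Real.sin θ * Real.sqrt (c*(1-c))
            = Real.sqrt ((1-c)/c)*Real.cos θ*Real.sqrt (c*(1-c)) := by
          linear_combination -hq2 - Real.cos θ*hid
        have htan : Real.sin θ / Real.cos θ = Real.sqrt ((1-c)/c) := by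
          rw [div_eq_iff (ne_of_gt h)]
          exact mul_right_cancel₀ (ne_of_gt hkpos) h5
        have hθeq : θ = Real.arctan (Real.sqrt ((1-c)/c)) := by
          rw [← htan, ← Real.tan_eq_sin_div_cos]
          exact (Real.arctan_tan (by linarith [Real.pi_pos]) hθlt).symm
        rw [hθeq]; exact min_le_right _ _
    · -- K = -1
      have hB1 : Real.cos θ*(Real.cos θ + (1-c)*t) = 0 := by
        linear_combination (hKp - hKval2 + hps)/2
      rcases mul_eq_zero.mp hB1 with h0 | h1
      · exact hpi2case h0
      · rcases lt_trichotomy (Real.cos θ) 0 with h|h|h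
        · exact hcneg h
        · exact hpi2case h
        · have hθlt : θ < Real.pi/2 := by
            by_contra h'
            push_neg at h'
            have := Real.cos_nonpos_of_pi_div_two_le_of_le h' (by linarith [Real.pi_pos])
            linarith
          have hq : Real.cos θ * Real.sqrt (c*(1-c))
              = -((1-c)*(Real.sin θ*Real.sin α)) := by
            linear_combination Real.sqrt (c*(1-c))*h1 - (1-c)*htk
          have hsa1 : Real.sin α = -1 := by
            have hfac2 : (Real.sin α - 1)*(Real.sin α + 1) = 0 := by linear_combination hsa2
            rcases mul_eq_zero.mp hfac2 with h4|h4
            · exfalso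
              have hsa : Real.sin α = 1 := by linarith
              rw [hsa] at hq
              nlinarith [mul_pos h hkpos, mul_pos (show (0:ℝ) < 1-c by linarith) hsi]
            · linarith
          rw [hsa1] at hq
          have hid : Real.sqrt (c/(1-c)) * Real.sqrt (c*(1-c)) = c := by
            rw [← Real.sqrt_mul (div_nonneg (le_of_lt hcc0) (by linarith))]
            rw [show c/(1-c)*(c*(1-c)) = c^2 from by
              field_simp [show (1-c) ≠ 0 by linarith]]
            exact Real.sqrt_sq (by linarith)
          have h5 : Real.sin θ * ((1-c) * Real.sqrt (c*(1-c)))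
              = Real.sqrt (c/(1-c))*Real.cos θ * ((1-c) * Real.sqrt (c*(1-c))) := by
            linear_combination (-(Real.sqrt (c*(1-c))))*hq
              - Real.cos θ*(1-c)*hid + Real.cos θ*hksq
          have htan : Real.sin θ / Real.cos θ = Real.sqrt (c/(1-c)) := by
            rw [div_eq_iff (ne_of_gt h)]
            exact mul_right_cancel₀
              (ne_of_gt (mul_pos (show (0:ℝ) < 1-c by linarith) hkpos)) h5
          have hθeq : θ = Real.arctan (Real.sqrt (c/(1-c))) := by
            rw [← htan, ← Real.tan_eq_sin_div_cos]
            exact (Real.arctan_tan (by linarith [Real.pi_pos]) hθlt).symm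
          rw [hθeq]; exact min_le_left _ _

set_option maxHeartbeats 2000000 in
/-- in the setting of Statement 10, if moreover `F(x̃,ỹ) = c`, then
`θ ≥ min{arctan√(c/(1−c)), arctan√((1−c)/c)}`.  (This computes the normal radius of
the cone over the minimal FKM isoparametric hypersurface.) -/
theorem stmt11 (n m : ℕ) (hm : 2 ≤ m) (hmn : m < n)
    (A : Fin (m - 1) → Matrix (Fin (n + 1)) (Fin (n + 1)) ℝ)
    (hA : IsSkewCliffordSystem A)
    (c : ℝ) (hc : c = ((m : ℝ) - 1) / ((n : ℝ) - 1))
    (x y : EuclideanSpace ℝ (Fin (n + 1))) (hx : ‖x‖ = 1) (hy : ‖y‖ = 1)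
    (hF : FKM A x y = c)
    (θ α : ℝ) (hθ : θ ∈ Set.Ioo 0 Real.pi)
    (t r s : ℝ)
    (ht : t = Real.sin θ * Real.sin α / Real.sqrt (c * (1 - c)))
    (hr : r = Real.cos θ + Real.sin θ * Real.cos α - c * t)
    (hs : s = Real.cos θ - Real.sin θ * Real.cos α - c * t)
    (xt yt : EuclideanSpace ℝ (Fin (n + 1)))
    (hxt : xt = r • x + t • (⟪x, y⟫ • y + ∑ p, ⟪act (A p) x, y⟫ • act (A p)ᵀ y))
    (hyt : yt = s • y + t • (⟪x, y⟫ • x + ∑ p, ⟪act (A p) x, y⟫ • act (A p) x))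
    (hxt1 : ‖xt‖ = 1) (hyt1 : ‖yt‖ = 1)
    (hFt : FKM A xt yt = c) :
    θ ≥ min (Real.arctan (Real.sqrt (c / (1 - c))))
        (Real.arctan (Real.sqrt ((1 - c) / c))) := by
  obtain ⟨hcl, hsk⟩ := hA
  have hxx : ⟪x, x⟫ = 1 := by rw [real_inner_self_eq_norm_mul_norm, hx]; ring
  have hyy : ⟪y, y⟫ = 1 := by rw [real_inner_self_eq_norm_mul_norm, hy]; ring
  set a := ⟪x, y⟫ with hadef
  set B : Fin (m - 1) → ℝ := fun p => ⟪act (A p) x, y⟫ with hBdef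
  have hBapp : ∀ p, ⟪act (A p) x, y⟫ = B p := fun p => rfl
  simp only [hBapp] at hxt hyt
  set U : EuclideanSpace ℝ (Fin (n + 1)) := a • y + ∑ p, B p • act ((A p)ᵀ) y with hUdef
  set V : EuclideanSpace ℝ (Fin (n + 1)) := a • x + ∑ p, B p • act (A p) x with hVdef
  have hsB : a ^ 2 + ∑ p, (B p) ^ 2 = c := by rw [← hF]; rfl
  have hsB' : a * a + ∑ p, B p * B p = c := by
    simpa only [pow_two] using hsB
  have hyx : ⟪y, x⟫ = a := by rw [real_inner_comm]
  have hyAx : ∀ p, ⟪y, act (A p) x⟫ = B p := fun p => by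
    rw [real_inner_comm]
  have hAyx : ∀ p, ⟪act (A p) y, x⟫ = -B p := fun p => by
    rw [SCS.inner_act_skew A hsk, hyAx]
  have hAyAx : ∀ p q, ⟪act (A p) y, act (A q) x⟫ = -⟪y, act (A p * A q) x⟫ :=
    fun p q => SCS.act_pair A hsk p q y x
  have hAxAx : ∀ p q, ⟪act (A p) x, act (A q) x⟫ = if p = q then 1 else 0 := fun p q => by
    rw [SCS.act_orth A hcl hsk x p q, hxx]
  have hAyAy : ∀ p q, ⟪act (A p) y, act (A q) y⟫ = if p = q then 1 else 0 := fun p q => by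
    rw [SCS.act_orth A hcl hsk y p q, hyy]
  have hxAx : ∀ p, ⟪x, act (A p) x⟫ = 0 := fun p => by
    rw [real_inner_comm]; exact SCS.inner_act_self A hsk p x
  have hyAy : ∀ p, ⟪y, act (A p) y⟫ = 0 := fun p => by
    rw [real_inner_comm]; exact SCS.inner_act_self A hsk p y
  have hTy2 : ∀ p, act ((A p)ᵀ) y = -act (A p) y := fun p => by rw [hsk, SCS.act_neg]
  have hWpair : ∀ p q, ⟪y, act (A p * A q) x⟫ + ⟪y, act (A q * A p) x⟫ =
      if p = q then -2 * a else 0 := fun p q => by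
    rw [SCS.clifford_pair A hcl y x p q, hyx]
  have hyU : ⟪y, U⟫ = a := by
    rw [hUdef, SCS.exp_right]
    have h : ∀ p, ⟪y, act ((A p)ᵀ) y⟫ = 0 := fun p => by
      simp [hTy2, hyAy p]
    simp [hyy, h, hy]
  have hUy : ⟪U, y⟫ = a := by rw [real_inner_comm]; exact hyU
  have hxU : ⟪x, U⟫ = c := by
    rw [hUdef, SCS.exp_right]
    have h : ∀ p, ⟪x, act ((A p)ᵀ) y⟫ = B p := fun p => by
      rw [← SCS.inner_act]
    simp only [h, ← hadef]
    exact hsB'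
  have hUx : ⟪U, x⟫ = c := by rw [real_inner_comm]; exact hxU
  have hApyU : ∀ p, ⟪act (A p) y, U⟫ = -B p := fun p => by
    rw [hUdef, SCS.exp_right]
    have h : ∀ q, ⟪act (A p) y, act ((A q)ᵀ) y⟫ = -(if p = q then (1:ℝ) else 0) := fun q => by
      rw [hTy2, inner_neg_right, hAyAy]
    simp only [h, SCS.inner_act_self A hsk p y, mul_zero, zero_add, mul_neg]
    rw [Finset.sum_neg_distrib, SCS.sum_delta]
  have hUU : ⟪U, U⟫ = c := by
    rw [hUdef, SCS.exp_left]
    have h : ∀ p, ⟪act ((A p)ᵀ) y, U⟫ = B p := fun p => by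
      rw [hTy2, inner_neg_left, hApyU, neg_neg]
    simp only [h, ← hUdef, hyU]
    exact hsB'
  have hxV : ⟪x, V⟫ = a := by
    rw [hVdef, SCS.exp_right]
    simp [hxAx, hxx, hx]
  have hyV : ⟪y, V⟫ = c := by
    rw [hVdef, SCS.exp_right]
    simp only [hyAx, hyy, hyx, mul_one]
    exact hsB'
  have hAqxV : ∀ q, ⟪act (A q) x, V⟫ = B q := fun q => by
    rw [hVdef, SCS.exp_right]
    have h0 : ⟪act (A q) x, x⟫ = 0 := SCS.inner_act_self A hsk q x
    simp only [h0, mul_zero, zero_add, hAxAx]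
    rw [SCS.sum_delta B q]
  have hApyV : ∀ p, ⟪act (A p) y, V⟫ =
      -(a * B p) - ∑ q, B q * ⟪y, act (A p * A q) x⟫ := fun p => by
    rw [hVdef, SCS.exp_right]
    simp only [hAyx, hAyAx, mul_neg]
    rw [Finset.sum_neg_distrib]
    ring
  have hS : ∑ p, ∑ q, B p * B q * ⟪y, act (A p * A q) x⟫ = -(a * ∑ p, (B p) ^ 2) := by
    have h2 := SCS.double_symm (F := fun p q => B p * B q * ⟪y, act (A p * A q) x⟫)
    have h3 : ∀ p q, B p * B q * ⟪y, act (A p * A q) x⟫ + B q * B p * ⟪y, act (A q * A p) x⟫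
        = B p * B p * (if p = q then -2 * a else 0) * (if p = q then 1 else 0) := by
      intro p q
      by_cases h : p = q
      · subst h; simp only [eq_self_iff_true, if_true, mul_one]
        have h5 := hWpair p p
        rw [if_pos rfl] at h5
        linear_combination (B p * B p) * h5
      · simp only [if_neg h]
        have h5 := hWpair p q
        rw [if_neg h] at h5
        linear_combination (B p * B q) * h5
    rw [Finset.sum_congr rfl fun p _ => Finset.sum_congr rfl fun q _ => h3 p q] at h2
    have h4 : ∀ p, ∑ q, B p * B p * (if p = q then -2 * a else 0) * (if p = q then (1:ℝ) else 0)
        = B p ^ 2 * (-2 * a) := by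
      intro p
      rw [Finset.sum_eq_single p]
      · rw [if_pos rfl, if_pos rfl, pow_two]; ring
      · intro b _ hb; simp [Ne.symm hb]
      · intro h; exact absurd (Finset.mem_univ p) h
    rw [Finset.sum_congr rfl fun p _ => h4 p] at h2
    have h5 : ∑ p, B p ^ 2 * (-2 * a) = (∑ p, B p ^ 2) * (-2 * a) := by
      rw [Finset.sum_mul]
    rw [h5] at h2
    linear_combination h2 / 2
  have hUV : ⟪U, V⟫ = a * c := by
    rw [hUdef, SCS.exp_left]
    have h : ∀ p, ⟪act ((A p)ᵀ) y, V⟫ =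
        a * B p + ∑ q, B q * ⟪y, act (A p * A q) x⟫ := fun p => by
      rw [hTy2, inner_neg_left, hApyV]; ring
    rw [Finset.sum_congr rfl fun p _ => by rw [h p]]
    rw [hyV]
    have h6 : ∑ p, B p * (a * B p + ∑ q, B q * ⟪y, act (A p * A q) x⟫)
        = a * ∑ p, B p ^ 2 + ∑ p, ∑ q, B p * B q * ⟪y, act (A p * A q) x⟫ := by
      simp only [mul_add, Finset.sum_add_distrib, Finset.mul_sum]
      congr 1
      · exact Finset.sum_congr rfl fun p _ => by ring
      · exact Finset.sum_congr rfl fun p _ => Finset.sum_congr rfl fun q _ => by rw [mul_assoc]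
    rw [h6, hS]
    ring
  have hAqUy : ∀ q, ⟪act (A q) U, y⟫ = B q := fun q => by
    rw [SCS.inner_act_skew A hsk, hUdef, SCS.exp_left]
    have h : ∀ p, ⟪act ((A p)ᵀ) y, act (A q) y⟫ = -(if p = q then (1:ℝ) else 0) := fun p => by
      rw [hTy2, inner_neg_left, hAyAy]
    simp only [h, hyAy q, mul_zero, zero_add, mul_neg]
    rw [Finset.sum_neg_distrib, SCS.sum_delta' B q]
    ring
  have hAqUV : ∀ q, ⟪act (A q) U, V⟫ = c * B q := by
    intro q
    have hAqV : act (A q) V = a • act (A q) x + ∑ p', B p' • act (A q * A p') x := by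
      rw [hVdef, SCS.act_add, SCS.act_smul, SCS.act_sum]
      congr 1
      exact Finset.sum_congr rfl fun p' _ => by rw [SCS.act_smul, SCS.act_act]
    have hyAqV : ⟪y, act (A q) V⟫ = a * B q + ∑ p', B p' * ⟪y, act (A q * A p') x⟫ := by
      rw [hAqV, SCS.exp_right, hyAx]
    have hApyAqV : ∀ p, ⟪act (A p) y, act (A q) V⟫ =
        -(a * ⟪y, act (A p * A q) x⟫) - ∑ p', B p' * ⟪y, act (A p * A q * A p') x⟫ := by
      intro p
      rw [hAqV, SCS.exp_right, hAyAx]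
      have h : ∀ p', ⟪act (A p) y, act (A q * A p') x⟫ =
          -⟪y, act (A p * A q * A p') x⟫ := fun p' => by
        rw [SCS.act_pairM A hsk, mul_assoc]
      simp only [h, mul_neg]
      rw [Finset.sum_neg_distrib]
      ring
    -- triple sum
    have hTpair : ∀ p p', ⟪y, act (A p * A q * A p') x⟫ + ⟪y, act (A p' * A q * A p) x⟫ =
        (if p = q then -2 * B p' else 0) + (if q = p' then -2 * B p else 0)
          + (if p = p' then 2 * B q else 0) := by
      intro p p'
      rw [← inner_add_right, ← SCS.act_addM, SCS.trip A hcl p q p', hcl, hcl, hcl,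
        SCS.ite_matrix, SCS.ite_matrix, SCS.ite_matrix, SCS.act_combo]
      simp only [hyAx]
      split_ifs <;> ring
    have hTsum : ∑ p, ∑ p', B p * B p' * ⟪y, act (A p * A q * A p') x⟫
        = -(B q * ∑ p, (B p) ^ 2) := by
      have h2 := SCS.double_symm
        (F := fun p p' => B p * B p' * ⟪y, act (A p * A q * A p') x⟫)
      have h3 : ∀ p p', B p * B p' * ⟪y, act (A p * A q * A p') x⟫
            + B p' * B p * ⟪y, act (A p' * A q * A p) x⟫
          = B p * B p' * ((if p = q then -2 * B p' else 0) + (if q = p' then -2 * B p else 0)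
            + (if p = p' then 2 * B q else 0)) := fun p p' => by
        rw [← hTpair p p']; ring
      rw [Finset.sum_congr rfl fun p _ => Finset.sum_congr rfl fun p' _ => h3 p p'] at h2
      have h4 : ∑ p, ∑ p', B p * B p' * ((if p = q then -2 * B p' else 0)
            + (if q = p' then -2 * B p else 0) + (if p = p' then 2 * B q else 0))
          = -2 * B q * ∑ p, (B p) ^ 2 := by
        have hS1 : ∑ p, ∑ p', B p * B p' * (if p = q then -2 * B p' else 0)
            = -2 * B q * ∑ p, (B p) ^ 2 := by
          rw [Finset.sum_eq_single q]
          · refine (Finset.sum_congr rfl fun p' _ => ?_).trans (Finset.mul_sum _ _ _).symm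
            rw [if_pos rfl, pow_two]; ring
          · intro b _ hb
            refine Finset.sum_eq_zero fun p' _ => by rw [if_neg hb, mul_zero]
          · intro h; exact absurd (Finset.mem_univ q) h
        have hS2 : ∑ p, ∑ p', B p * B p' * (if q = p' then -2 * B p else 0)
            = -2 * B q * ∑ p, (B p) ^ 2 := by
          have hin : ∀ p, ∑ p', B p * B p' * (if q = p' then -2 * B p else 0)
              = -2 * B q * (B p) ^ 2 := by
            intro p
            rw [Finset.sum_eq_single q]
            · rw [if_pos rfl, pow_two]; ring
            · intro b _ hb; rw [if_neg fun hh => hb hh.symm, mul_zero]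
            · intro h; exact absurd (Finset.mem_univ q) h
          rw [Finset.sum_congr rfl fun p _ => hin p, ← Finset.mul_sum]
        have hS3 : ∑ p, ∑ p', B p * B p' * (if p = p' then 2 * B q else 0)
            = 2 * B q * ∑ p, (B p) ^ 2 := by
          have hin : ∀ p, ∑ p', B p * B p' * (if p = p' then 2 * B q else 0)
              = 2 * B q * (B p) ^ 2 := by
            intro p
            rw [Finset.sum_eq_single p]
            · rw [if_pos rfl, pow_two]; ring
            · intro b _ hb; rw [if_neg fun hh => hb hh.symm, mul_zero]
            · intro h; exact absurd (Finset.mem_univ p) h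
          rw [Finset.sum_congr rfl fun p _ => hin p, ← Finset.mul_sum]
        simp only [mul_add, Finset.sum_add_distrib]
        rw [hS1, hS2, hS3]; ring
      rw [h4] at h2
      linear_combination h2 / 2
    rw [SCS.inner_act_skew A hsk, hUdef, SCS.exp_left]
    have h : ∀ p, ⟪act ((A p)ᵀ) y, act (A q) V⟫ =
        a * ⟪y, act (A p * A q) x⟫ + ∑ p', B p' * ⟪y, act (A p * A q * A p') x⟫ := fun p => by
      rw [hTy2, inner_neg_left, hApyAqV]; ring
    rw [Finset.sum_congr rfl fun p _ => by rw [h p], hyAqV]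
    have hsplit : ∑ p, B p * (a * ⟪y, act (A p * A q) x⟫
          + ∑ p', B p' * ⟪y, act (A p * A q * A p') x⟫)
        = a * ∑ p, B p * ⟪y, act (A p * A q) x⟫
          + ∑ p, ∑ p', B p * B p' * ⟪y, act (A p * A q * A p') x⟫ := by
      simp only [mul_add, Finset.sum_add_distrib, Finset.mul_sum]
      congr 1
      · exact Finset.sum_congr rfl fun p _ => by ring
      · exact Finset.sum_congr rfl fun p _ => Finset.sum_congr rfl fun p' _ => by ring
    rw [hsplit]
    have hmid2 : ∑ p', B p' * ⟪y, act (A q * A p') x⟫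
        + ∑ p, B p * ⟪y, act (A p * A q) x⟫ = -2 * a * B q := by
      rw [← Finset.sum_add_distrib]
      rw [Finset.sum_congr rfl fun p _ =>
        show B p * ⟪y, act (A q * A p) x⟫ + B p * ⟪y, act (A p * A q) x⟫
            = B p * (if q = p then -2 * a else 0) from by rw [← hWpair q p]; ring]
      rw [Finset.sum_eq_single q]
      · rw [if_pos rfl]; ring
      · intro b _ hb; rw [if_neg fun hh => hb hh.symm, mul_zero]
      · intro h; exact absurd (Finset.mem_univ q) h
    linear_combination (-a) * hmid2 - hTsum + B q * hsB
  set K : ℝ := r*s + r*t + s*t + c*t^2 with hKdef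
  have hxtyt : ⟪xt, yt⟫ = a * K := by
    rw [hxt, hyt, hKdef]
    simp only [inner_add_left, inner_add_right, real_inner_smul_left, real_inner_smul_right,
      hxV, hUy, hUV, ← hadef]
    ring
  have hAxtyt : ∀ q, ⟪act (A q) xt, yt⟫ = B q * K := by
    intro q
    rw [hxt, hyt, hKdef, SCS.act_add, SCS.act_smul, SCS.act_smul]
    simp only [inner_add_left, inner_add_right, real_inner_smul_left, real_inner_smul_right,
      hBapp, hAqxV, hAqUy, hAqUV]
    ring
  have hFt2 : c * K ^ 2 = c := by
    have h1 : (a*K)^2 + ∑ q, (B q*K)^2 = c := by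
      rw [← hFt]
      rw [show FKM A xt yt = ⟪xt,yt⟫^2 + ∑ q, ⟪act (A q) xt, yt⟫^2 from rfl, hxtyt]
      congr 1
      exact Finset.sum_congr rfl fun q _ => by rw [hAxtyt q]
    have h2 : ∑ q, (B q*K)^2 = (∑ q, (B q)^2)*K^2 := by
      rw [Finset.sum_mul]; exact Finset.sum_congr rfl fun q _ => by ring
    linear_combination h1 - h2 - K^2 * hsB
  have hm' : (2:ℝ) ≤ (m:ℝ) := by exact_mod_cast hm
  have hn' : (m:ℝ) < (n:ℝ) := by exact_mod_cast hmn
  have hcc0 : 0 < c := by rw [hc]; apply div_pos <;> linarith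
  have hc1 : c < 1 := by rw [hc, div_lt_one (by linarith)]; linarith
  have hK21 : K^2 = 1 := mul_left_cancel₀ (ne_of_gt hcc0) (by rw [hFt2, mul_one])
  have hxtxt : r^2 + 2*(r*t)*c + t^2*c = 1 := by
    have h1 : ⟪xt, xt⟫ = 1 := by rw [real_inner_self_eq_norm_mul_norm, hxt1]; ring
    rw [hxt] at h1
    simp only [inner_add_left, inner_add_right, real_inner_smul_left, real_inner_smul_right,
      hxx, hxU, hUx, hUU] at h1
    linear_combination h1
  clear hxt hyt hFt hF hxt1 hyt1 hx hy
  exact stmt11_scalar c θ α t r s K hcc0 hc1 hθ.1 hθ.2 ht hr hs hKdef hK21 hxtxt
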